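/- Composition of M-morphisms is associative: if f : A ⇸ B is an M-morphism and g : B ⇸ C, h : C ⇸ D are dense and multiplicative M-morphisms (with C, D non-degenerate semigroups), then (h∙g)∙f = h∙(g∙f). -/

import Mathlib

open CategoryTheory Category MonoidalCategory Limits

universe v u

variable {C : Type u} [Category.{v} C] [MonoidalCategory C]

/-- A semigroup multiplication is non-degenerate. -/
def NonDeg (A : C) (m : A ⊗ A ⟶ A) : Prop :=
  (∀ X Y : C, Function.Injective (fun f : X ⟶ Y ⊗ A =>
      (f ▷ A) ≫ (α_ Y A A).hom ≫ (Y ◁ m))) ∧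
  (∀ X Y : C, Function.Injective (fun g : X ⟶ A ⊗ Y =>
      (A ◁ g) ≫ (α_ A A Y).inv ≫ (m ▷ Y)))

/-- Associativity of a semigroup multiplication. -/
def SgAssoc (A : C) (m : A ⊗ A ⟶ A) : Prop :=
  (m ▷ A) ≫ m = (α_ A A A).hom ≫ (A ◁ m) ≫ m

/-- A pair (f₁, f₂) is an `𝕄`-morphism `A ⇸ B`: eq. (2). -/
def IsMMor {A B : C} (mB : B ⊗ B ⟶ B) (f₁ : A ⊗ B ⟶ B) (f₂ : B ⊗ A ⟶ B) : Prop :=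
  (f₂ ▷ B) ≫ mB = (α_ B A B).hom ≫ (B ◁ f₁) ≫ mB

/-- The first component of an `𝕄`-morphism is multiplicative. -/
def Mult₁ {A B : C} (mA : A ⊗ A ⟶ A) (f₁ : A ⊗ B ⟶ B) : Prop :=
  (mA ▷ B) ≫ f₁ = (α_ A A B).hom ≫ (A ◁ f₁) ≫ f₁

/-- The second component of an `𝕄`-morphism is multiplicative. -/
def Mult₂ {A B : C} (mA : A ⊗ A ⟶ A) (f₂ : B ⊗ A ⟶ B) : Prop :=
  (α_ B A A).hom ≫ (B ◁ mA) ≫ f₂ = (f₂ ▷ A) ≫ f₂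

/-- The standing assumptions on the class `Q` of regular epimorphisms. -/
structure QData (C : Type u) [Category.{v} C] [MonoidalCategory C] where
  Q : MorphismProperty C
  regEpi : ∀ ⦃X Y : C⦄ (f : X ⟶ Y), Q f → Nonempty (RegularEpi f)
  comp_mem : ∀ ⦃X Y Z : C⦄ (f : X ⟶ Y) (g : Y ⟶ Z), Q f → Q g → Q (f ≫ g)
  tensor_mem : ∀ ⦃X Y X' Y' : C⦄ (f : X ⟶ Y) (g : X' ⟶ Y'), Q f → Q g → Q (f ⊗ₘ g)
  iso_mem : ∀ ⦃X Y : C⦄ (f : X ⟶ Y), IsIso f → Q f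
  cancel : ∀ ⦃X Y Z : C⦄ (s : X ⟶ Y) (t : Y ⟶ Z), Q s → Q (s ≫ t) → Q t
  coeq : ∀ ⦃X Y : C⦄ (f : X ⟶ Y), Q f →
    ∃ (Z : C) (u v : Z ⟶ X) (h : u ≫ f = v ≫ f),
      Nonempty (IsColimit (Cofork.ofπ f h)) ∧
      (∀ W : C, Nonempty (IsColimit (Cofork.ofπ (f := W ◁ u) (g := W ◁ v) (W ◁ f)
        (by rw [← MonoidalCategory.whiskerLeft_comp, ← MonoidalCategory.whiskerLeft_comp, h])))) ∧
      (∀ W : C, Nonempty (IsColimit (Cofork.ofπ (f := u ▷ W) (g := v ▷ W) (f ▷ W)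
        (by rw [← MonoidalCategory.comp_whiskerRight, ← MonoidalCategory.comp_whiskerRight, h]))))


section Aux

variable {C : Type u} [Category.{v} C] [MonoidalCategory C]

lemma QData.epi (QD : QData C) {X Y : C} (f : X ⟶ Y) (h : QD.Q f) : Epi f := by
  obtain ⟨r⟩ := QD.regEpi f h
  haveI := r
  exact RegularEpi.epi f r

lemma QData.whiskerLeft_mem (QD : QData C) (W : C) {X Y : C} (f : X ⟶ Y) (h : QD.Q f) :
    QD.Q (W ◁ f) := by
  rw [← MonoidalCategory.id_tensorHom]
  exact QD.tensor_mem _ _ (QD.iso_mem _ inferInstance) h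

lemma QData.whiskerRight_mem (QD : QData C) {X Y : C} (f : X ⟶ Y) (W : C) (h : QD.Q f) :
    QD.Q (f ▷ W) := by
  rw [← MonoidalCategory.tensorHom_id]
  exact QD.tensor_mem _ _ h (QD.iso_mem _ inferInstance)

end Aux

/-- Proposition 3.3: composition of `𝕄`-morphisms is associative:
`(h ∙ g) ∙ f = h ∙ (g ∙ f)` whenever `g` and `h` are dense and multiplicative. -/
theorem mmor_composition_assoc (QD : QData C) {A B Cc D : C}
    (mB : B ⊗ B ⟶ B) (mC : Cc ⊗ Cc ⟶ Cc) (mD : D ⊗ D ⟶ D)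
    (hB : SgAssoc B mB) (hC : SgAssoc Cc mC) (hD : SgAssoc D mD)
    (hndC : NonDeg Cc mC) (hndD : NonDeg D mD)
    (f₁ : A ⊗ B ⟶ B) (f₂ : B ⊗ A ⟶ B) (hf : IsMMor mB f₁ f₂)
    (g₁ : B ⊗ Cc ⟶ Cc) (g₂ : Cc ⊗ B ⟶ Cc) (hg : IsMMor mC g₁ g₂)
    (hgd₁ : QD.Q g₁) (hgd₂ : QD.Q g₂) (hgm₁ : Mult₁ mB g₁) (hgm₂ : Mult₂ mB g₂)
    (h₁ : Cc ⊗ D ⟶ D) (h₂ : D ⊗ Cc ⟶ D) (hh : IsMMor mD h₁ h₂)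
    (hhd₁ : QD.Q h₁) (hhd₂ : QD.Q h₂) (hhm₁ : Mult₁ mC h₁) (hhm₂ : Mult₂ mC h₂)
    -- the composite h ∙ g
    (hg₁ : B ⊗ D ⟶ D) (hg₂ : D ⊗ B ⟶ D) (hhg : IsMMor mD hg₁ hg₂)
    (hhg₁ : (α_ B Cc D).hom ≫ (B ◁ h₁) ≫ hg₁ = (g₁ ▷ D) ≫ h₁)
    (hhg₂ : (h₂ ▷ B) ≫ hg₂ = (α_ D Cc B).hom ≫ (D ◁ g₂) ≫ h₂)
    -- the composite g ∙ f
    (gf₁ : A ⊗ Cc ⟶ Cc) (gf₂ : Cc ⊗ A ⟶ Cc) (hgf : IsMMor mC gf₁ gf₂)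
    (hgf₁ : (α_ A B Cc).hom ≫ (A ◁ g₁) ≫ gf₁ = (f₁ ▷ Cc) ≫ g₁)
    (hgf₂ : (g₂ ▷ A) ≫ gf₂ = (α_ Cc B A).hom ≫ (Cc ◁ f₂) ≫ g₂)
    -- the composite (h ∙ g) ∙ f
    (p₁ : A ⊗ D ⟶ D) (p₂ : D ⊗ A ⟶ D) (hp : IsMMor mD p₁ p₂)
    (hp₁ : (α_ A B D).hom ≫ (A ◁ hg₁) ≫ p₁ = (f₁ ▷ D) ≫ hg₁)
    (hp₂ : (hg₂ ▷ A) ≫ p₂ = (α_ D B A).hom ≫ (D ◁ f₂) ≫ hg₂)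
    -- the composite h ∙ (g ∙ f)
    (q₁ : A ⊗ D ⟶ D) (q₂ : D ⊗ A ⟶ D) (hq : IsMMor mD q₁ q₂)
    (hq₁ : (α_ A Cc D).hom ≫ (A ◁ h₁) ≫ q₁ = (gf₁ ▷ D) ≫ h₁)
    (hq₂ : (h₂ ▷ A) ≫ q₂ = (α_ D Cc A).hom ≫ (D ◁ gf₂) ≫ h₂) :
    p₁ = q₁ ∧ p₂ = q₂ := by
  constructor
  · -- first components
    have hp₁' : (A ◁ hg₁) ≫ p₁ = (α_ A B D).inv ≫ (f₁ ▷ D) ≫ hg₁ := by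
      rw [← hp₁]; simp
    have hq₁' : (A ◁ h₁) ≫ q₁ = (α_ A Cc D).inv ≫ (gf₁ ▷ D) ≫ h₁ := by
      rw [← hq₁]; simp
    have hhg₁' : (B ◁ h₁) ≫ hg₁ = (α_ B Cc D).inv ≫ (g₁ ▷ D) ≫ h₁ := by
      rw [← hhg₁]; simp
    have hgf₁' : (A ◁ g₁) ≫ gf₁ = (α_ A B Cc).inv ≫ (f₁ ▷ Cc) ≫ g₁ := by
      rw [← hgf₁]; simp
    have pent : (A ◁ (α_ B Cc D).hom) ≫ (α_ A B (Cc ⊗ D)).inv ≫ (α_ (A ⊗ B) Cc D).inv =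
        (α_ A (B ⊗ Cc) D).inv ≫ ((α_ A B Cc).inv ▷ D) := by
      rw [← MonoidalCategory.pentagon_inv, ← MonoidalCategory.whiskerLeft_comp_assoc,
        Iso.hom_inv_id, MonoidalCategory.whiskerLeft_id, id_comp]
    have hεQ : QD.Q ((g₁ ▷ D) ≫ h₁) :=
      QD.comp_mem _ _ (QD.whiskerRight_mem g₁ D hgd₁) hhd₁
    haveI : Epi (A ◁ ((g₁ ▷ D) ≫ h₁)) := QD.epi _ (QD.whiskerLeft_mem A _ hεQ)
    have L : (A ◁ ((g₁ ▷ D) ≫ h₁)) ≫ p₁ =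
        (α_ A (B ⊗ Cc) D).inv ≫ ((α_ A B Cc).inv ▷ D) ≫ (f₁ ▷ Cc ▷ D) ≫ (g₁ ▷ D) ≫ h₁ := by
      calc (A ◁ ((g₁ ▷ D) ≫ h₁)) ≫ p₁
          = (A ◁ (α_ B Cc D).hom) ≫ (A ◁ (B ◁ h₁)) ≫ (A ◁ hg₁) ≫ p₁ := by
            rw [← hhg₁]
            simp only [MonoidalCategory.whiskerLeft_comp, assoc]
        _ = (A ◁ (α_ B Cc D).hom) ≫ (A ◁ (B ◁ h₁)) ≫ (α_ A B D).inv ≫ (f₁ ▷ D) ≫ hg₁ := by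
            rw [hp₁']
        _ = (A ◁ (α_ B Cc D).hom) ≫ (α_ A B (Cc ⊗ D)).inv ≫ ((A ⊗ B) ◁ h₁) ≫
              (f₁ ▷ D) ≫ hg₁ := by
            rw [MonoidalCategory.associator_inv_naturality_right_assoc]
        _ = (A ◁ (α_ B Cc D).hom) ≫ (α_ A B (Cc ⊗ D)).inv ≫ (f₁ ▷ (Cc ⊗ D)) ≫
              (B ◁ h₁) ≫ hg₁ := by
            rw [MonoidalCategory.whisker_exchange_assoc]
        _ = (A ◁ (α_ B Cc D).hom) ≫ (α_ A B (Cc ⊗ D)).inv ≫ (f₁ ▷ (Cc ⊗ D)) ≫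
              (α_ B Cc D).inv ≫ (g₁ ▷ D) ≫ h₁ := by
            rw [hhg₁']
        _ = (A ◁ (α_ B Cc D).hom) ≫ (α_ A B (Cc ⊗ D)).inv ≫ (α_ (A ⊗ B) Cc D).inv ≫
              (f₁ ▷ Cc ▷ D) ≫ (g₁ ▷ D) ≫ h₁ := by
            rw [MonoidalCategory.associator_inv_naturality_left_assoc]
        _ = (α_ A (B ⊗ Cc) D).inv ≫ ((α_ A B Cc).inv ▷ D) ≫ (f₁ ▷ Cc ▷ D) ≫
              (g₁ ▷ D) ≫ h₁ := by
            rw [reassoc_of% pent]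
    have R : (A ◁ ((g₁ ▷ D) ≫ h₁)) ≫ q₁ =
        (α_ A (B ⊗ Cc) D).inv ≫ ((α_ A B Cc).inv ▷ D) ≫ (f₁ ▷ Cc ▷ D) ≫ (g₁ ▷ D) ≫ h₁ := by
      calc (A ◁ ((g₁ ▷ D) ≫ h₁)) ≫ q₁
          = (A ◁ (g₁ ▷ D)) ≫ (A ◁ h₁) ≫ q₁ := by
            simp only [MonoidalCategory.whiskerLeft_comp, assoc]
        _ = (A ◁ (g₁ ▷ D)) ≫ (α_ A Cc D).inv ≫ (gf₁ ▷ D) ≫ h₁ := by rw [hq₁']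
        _ = (α_ A (B ⊗ Cc) D).inv ≫ ((A ◁ g₁) ▷ D) ≫ (gf₁ ▷ D) ≫ h₁ := by
            rw [MonoidalCategory.associator_inv_naturality_middle_assoc]
        _ = (α_ A (B ⊗ Cc) D).inv ≫ (((A ◁ g₁) ≫ gf₁) ▷ D) ≫ h₁ := by
            rw [← MonoidalCategory.comp_whiskerRight_assoc]
        _ = (α_ A (B ⊗ Cc) D).inv ≫ (((α_ A B Cc).inv ≫ (f₁ ▷ Cc) ≫ g₁) ▷ D) ≫ h₁ := by
            rw [hgf₁']
        _ = (α_ A (B ⊗ Cc) D).inv ≫ ((α_ A B Cc).inv ▷ D) ≫ (f₁ ▷ Cc ▷ D) ≫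
              (g₁ ▷ D) ≫ h₁ := by
            simp only [MonoidalCategory.comp_whiskerRight, assoc]
    exact (cancel_epi (A ◁ ((g₁ ▷ D) ≫ h₁))).mp (L.trans R.symm)
  · -- second components
    have hεQ : QD.Q ((h₂ ▷ B) ≫ hg₂) := by
      rw [hhg₂]
      exact QD.comp_mem _ _ (QD.iso_mem _ inferInstance)
        (QD.comp_mem _ _ (QD.whiskerLeft_mem D g₂ hgd₂) hhd₂)
    haveI : Epi (((h₂ ▷ B) ≫ hg₂) ▷ A) := QD.epi _ (QD.whiskerRight_mem _ A hεQ)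
    have L : (((h₂ ▷ B) ≫ hg₂) ▷ A) ≫ p₂ =
        (α_ (D ⊗ Cc) B A).hom ≫ (α_ D Cc (B ⊗ A)).hom ≫ (D ◁ Cc ◁ f₂) ≫
          (D ◁ g₂) ≫ h₂ := by
      calc (((h₂ ▷ B) ≫ hg₂) ▷ A) ≫ p₂
          = (h₂ ▷ B ▷ A) ≫ (hg₂ ▷ A) ≫ p₂ := by
            simp only [MonoidalCategory.comp_whiskerRight, assoc]
        _ = (h₂ ▷ B ▷ A) ≫ (α_ D B A).hom ≫ (D ◁ f₂) ≫ hg₂ := by rw [hp₂]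
        _ = (α_ (D ⊗ Cc) B A).hom ≫ (h₂ ▷ (B ⊗ A)) ≫ (D ◁ f₂) ≫ hg₂ := by
            rw [MonoidalCategory.associator_naturality_left_assoc]
        _ = (α_ (D ⊗ Cc) B A).hom ≫ ((D ⊗ Cc) ◁ f₂) ≫ (h₂ ▷ B) ≫ hg₂ := by
            rw [← MonoidalCategory.whisker_exchange_assoc]
        _ = (α_ (D ⊗ Cc) B A).hom ≫ ((D ⊗ Cc) ◁ f₂) ≫ (α_ D Cc B).hom ≫
              (D ◁ g₂) ≫ h₂ := by rw [hhg₂]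
        _ = (α_ (D ⊗ Cc) B A).hom ≫ (α_ D Cc (B ⊗ A)).hom ≫ (D ◁ Cc ◁ f₂) ≫
              (D ◁ g₂) ≫ h₂ := by
            rw [MonoidalCategory.associator_naturality_right_assoc]
    have R : (((h₂ ▷ B) ≫ hg₂) ▷ A) ≫ q₂ =
        (α_ (D ⊗ Cc) B A).hom ≫ (α_ D Cc (B ⊗ A)).hom ≫ (D ◁ Cc ◁ f₂) ≫
          (D ◁ g₂) ≫ h₂ := by
      calc (((h₂ ▷ B) ≫ hg₂) ▷ A) ≫ q₂
          = ((α_ D Cc B).hom ▷ A) ≫ ((D ◁ g₂) ▷ A) ≫ (h₂ ▷ A) ≫ q₂ := by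
            rw [hhg₂]
            simp only [MonoidalCategory.comp_whiskerRight, assoc]
        _ = ((α_ D Cc B).hom ▷ A) ≫ ((D ◁ g₂) ▷ A) ≫ (α_ D Cc A).hom ≫
              (D ◁ gf₂) ≫ h₂ := by rw [hq₂]
        _ = ((α_ D Cc B).hom ▷ A) ≫ (α_ D (Cc ⊗ B) A).hom ≫ (D ◁ (g₂ ▷ A)) ≫
              (D ◁ gf₂) ≫ h₂ := by
            rw [MonoidalCategory.associator_naturality_middle_assoc]
        _ = ((α_ D Cc B).hom ▷ A) ≫ (α_ D (Cc ⊗ B) A).hom ≫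
              (D ◁ ((g₂ ▷ A) ≫ gf₂)) ≫ h₂ := by
            rw [← MonoidalCategory.whiskerLeft_comp_assoc]
        _ = ((α_ D Cc B).hom ▷ A) ≫ (α_ D (Cc ⊗ B) A).hom ≫
              (D ◁ ((α_ Cc B A).hom ≫ (Cc ◁ f₂) ≫ g₂)) ≫ h₂ := by rw [hgf₂]
        _ = ((α_ D Cc B).hom ▷ A) ≫ (α_ D (Cc ⊗ B) A).hom ≫ (D ◁ (α_ Cc B A).hom) ≫
              (D ◁ Cc ◁ f₂) ≫ (D ◁ g₂) ≫ h₂ := by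
            simp only [MonoidalCategory.whiskerLeft_comp, assoc]
        _ = (α_ (D ⊗ Cc) B A).hom ≫ (α_ D Cc (B ⊗ A)).hom ≫ (D ◁ Cc ◁ f₂) ≫
              (D ◁ g₂) ≫ h₂ := by
            rw [reassoc_of% (MonoidalCategory.pentagon D Cc B A)]
    exact (cancel_epi (((h₂ ▷ B) ≫ hg₂) ▷ A)).mp (L.trans R.symm)
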